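/- Let f : ℝⁿ → ℝ be differentiable and L-smooth with L > 0, let g(x) = Σ_{i=1}^n g_i(x_i), set F := f + g, let x* be a global minimizer of F, ξ(x) := F(x) − F(x*) with ξ(x⁰) > 0, and define λ(x) := −L·inf_{y ∈ ℝⁿ} { ⟨∇f(x), y⟩ + (L/2)‖y‖² + g(x+y) − g(x) }. Let x^{k+1} := x^k + (u^k)_{[S_k]}, where S_k ⊆ {1,…,n} is nonempty and u^k ∈ ℝⁿ, and suppose there is c > 0 such that for every k < K one has −U_{S_k}(x^k, u^k) ≥ c·λ(x^k). Fix ε > 0 and assume (ξ(x⁰)/ε)·log(ξ(x⁰)/ε) ≤ c·K. Then at least one of the following holds: (i) λ(x^k) < ε for at least one k ∈ {0, …, K−1}, or (ii) ξ(x^K) ≤ ε. -/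

import Mathlib

open scoped RealInnerProductSpace BigOperators

/-- The quantity `λ(x) = -L · inf_y { ⟨∇f(x),y⟩ + (L/2)‖y‖² + g(x+y) - g(x) }`. -/
noncomputable def lamFun {n : ℕ} (f g : EuclideanSpace ℝ (Fin n) → ℝ) (L : ℝ)
    (x : EuclideanSpace ℝ (Fin n)) : ℝ :=
  -L * sInf (Set.range fun y : EuclideanSpace ℝ (Fin n) =>
    ⟪gradient f x, y⟫ + L / 2 * ‖y‖ ^ 2 + g (x + y) - g x)

/-- The masked vector `u_{[S]}`. -/
noncomputable def maskVec {n : ℕ} (S : Finset (Fin n)) (u : EuclideanSpace ℝ (Fin n)) :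
    EuclideanSpace ℝ (Fin n) :=
  (EuclideanSpace.equiv (Fin n) ℝ).symm fun i => if i ∈ S then u i else 0

/-- The block upper bound `U_S(x, u)` with `M = L·I`. -/
noncomputable def USFun {n : ℕ} (f : EuclideanSpace ℝ (Fin n) → ℝ) (gi : Fin n → ℝ → ℝ)
    (L : ℝ) (S : Finset (Fin n)) (x u : EuclideanSpace ℝ (Fin n)) : ℝ :=
  (∑ i ∈ S, gradient f x i * u i) + L / 2 * (∑ i ∈ S, u i ^ 2) +
    ∑ i ∈ S, (gi i (x i + u i) - gi i (x i))

lemma mask_inner {n : ℕ} (S : Finset (Fin n)) (u v : EuclideanSpace ℝ (Fin n)) :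
    ⟪v, maskVec S u⟫ = ∑ i ∈ S, v i * u i := by
  rw [PiLp.inner_apply]
  simp only [RCLike.inner_apply, starRingEnd_apply, star_trivial]
  rw [← Finset.sum_subset (Finset.subset_univ S)]
  · exact Finset.sum_congr rfl fun i hi => by simp [maskVec, hi]; ring
  · intro i _ hi; simp [maskVec, hi]

lemma mask_norm {n : ℕ} (S : Finset (Fin n)) (u : EuclideanSpace ℝ (Fin n)) :
    ‖maskVec S u‖ ^ 2 = ∑ i ∈ S, u i ^ 2 := by
  rw [← real_inner_self_eq_norm_sq, PiLp.inner_apply]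
  simp only [RCLike.inner_apply, starRingEnd_apply, star_trivial]
  rw [← Finset.sum_subset (Finset.subset_univ S)]
  · exact Finset.sum_congr rfl fun i hi => by simp [maskVec, hi, sq]
  · intro i _ hi; simp [maskVec, hi]

theorem general_nonconvex_block_descent {n : ℕ} (f g : EuclideanSpace ℝ (Fin n) → ℝ)
    (gi : Fin n → ℝ → ℝ) (L c : ℝ) (hL : 0 < L) (hc : 0 < c)
    (hdiff : Differentiable ℝ f)
    (hsmooth : ∀ x h : EuclideanSpace ℝ (Fin n),
      f (x + h) ≤ f x + ⟪gradient f x, h⟫ + L / 2 * ‖h‖ ^ 2)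
    (hg : ∀ x : EuclideanSpace ℝ (Fin n), g x = ∑ i, gi i (x i))
    (xstar : EuclideanSpace ℝ (Fin n)) (hmin : ∀ y, f xstar + g xstar ≤ f y + g y)
    (X : ℕ → EuclideanSpace ℝ (Fin n)) (S : ℕ → Finset (Fin n))
    (u : ℕ → EuclideanSpace ℝ (Fin n))
    (hξ0 : 0 < f (X 0) + g (X 0) - (f xstar + g xstar))
    (hSne : ∀ k, (S k).Nonempty)
    (hiter : ∀ k : ℕ, X (k + 1) = X k + maskVec (S k) (u k))
    (K : ℕ)
    (hprog : ∀ k < K, c * lamFun f g L (X k) ≤ -USFun f gi L (S k) (X k) (u k))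
    (ε : ℝ) (hε : 0 < ε)
    (hK : (f (X 0) + g (X 0) - (f xstar + g xstar)) / ε *
        Real.log ((f (X 0) + g (X 0) - (f xstar + g xstar)) / ε) ≤ c * K) :
    (∃ k < K, lamFun f g L (X k) < ε) ∨
      f (X K) + g (X K) - (f xstar + g xstar) ≤ ε := by
  by_cases hlam : ∃ k < K, lamFun f g L (X k) < ε
  · exact Or.inl hlam
  right
  push_neg at hlam
  set F : EuclideanSpace ℝ (Fin n) → ℝ := fun x => f x + g x with hF
  have hdesc : ∀ k, F (X (k + 1)) ≤ F (X k) + USFun f gi L (S k) (X k) (u k) := by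
    intro k
    set x := X k
    set m := maskVec (S k) (u k) with hm
    have h1 := hsmooth x m
    have hin : ⟪gradient f x, m⟫ = ∑ i ∈ S k, gradient f x i * u k i := mask_inner _ _ _
    have hnm : ‖m‖ ^ 2 = ∑ i ∈ S k, u k i ^ 2 := mask_norm _ _
    have hgs : g (x + m) - g x = ∑ i ∈ S k, (gi i (x i + u k i) - gi i (x i)) := by
      rw [hg, hg, ← Finset.sum_sub_distrib,
        ← Finset.sum_subset (Finset.subset_univ (S k))]
      · refine Finset.sum_congr rfl fun i hi => ?_
        have : (x + m) i = x i + u k i := by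
          simp [hm, maskVec, hi, PiLp.add_apply]
        rw [this]
      · intro i _ hi
        have : (x + m) i = x i := by simp [hm, maskVec, hi, PiLp.add_apply]
        rw [this]; ring
    have : F (X (k + 1)) = f (x + m) + g (x + m) := by rw [hiter k]
    rw [this]
    have : USFun f gi L (S k) x (u k) =
        ⟪gradient f x, m⟫ + L / 2 * ‖m‖ ^ 2 + (g (x + m) - g x) := by
      rw [hin, hnm, hgs, USFun]
    rw [this]
    simp only [hF]
    linarith [h1]
  have hstep : ∀ k < K, F (X (k + 1)) ≤ F (X k) - c * ε := by
    intro k hk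
    have h1 := hdesc k
    have h2 := hprog k hk
    have h3 := hlam k hk
    nlinarith [mul_le_mul_of_nonneg_left h3 hc.le]
  have hind : ∀ j, j ≤ K → F (X j) - F xstar ≤ (F (X 0) - F xstar) - j * (c * ε) := by
    intro j hj
    induction j with
    | zero => simp
    | succ j ih =>
      have hjK : j < K := Nat.lt_of_succ_le hj
      have := hstep j hjK
      have := ih (Nat.le_of_lt hjK)
      push_cast
      push_cast at this ⊢
      linarith
  have hfin := hind K le_rfl
  set ξ0 := f (X 0) + g (X 0) - (f xstar + g xstar) with hξ0def
  set t := ξ0 / ε with ht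
  have htpos : 0 < t := div_pos hξ0 hε
  have hlog : Real.log (1 / t) ≤ 1 / t - 1 :=
    Real.log_le_sub_one_of_pos (by positivity)
  rw [Real.log_div one_ne_zero (ne_of_gt htpos), Real.log_one] at hlog
  have h4 : t - 1 ≤ t * Real.log t := by
    have := mul_le_mul_of_nonneg_left hlog htpos.le
    have hinv : t * (1 / t) = 1 := mul_one_div_cancel (ne_of_gt htpos)
    nlinarith
  have h5 : t - 1 ≤ c * K := le_trans h4 hK
  have h6 : ξ0 - (K : ℝ) * (c * ε) ≤ ε := by
    have : ξ0 = t * ε := by rw [ht, div_mul_cancel₀ _ hε.ne']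
    nlinarith
  have : F (X K) - F xstar = f (X K) + g (X K) - (f xstar + g xstar) := by simp [hF]
  linarith [hfin, h6]
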